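/- Let (Ω, F, μ) be a probability space, A, B sub-σ-algebras of F, and c = ψ'(A,B). Let ν be the pushforward of μ under the diagonal map T: Ω → Ω×Ω, ω ↦ (ω,ω), viewed as a measure on A⊗B, and let μ_1, μ_2 be the restrictions of μ to A and B. Then ν ≥ c(μ_1 ⊗ μ_2), i.e., ν - c(μ_1 ⊗ μ_2) is a (nonnegative) measure on A⊗B. -/

import Mathlib

open MeasureTheory
open scoped ENNReal symmDiff

/-- The dependence coefficient
`ψ'(𝒜, ℬ) = inf { μ(A ∩ B) / (μ A * μ B) : A ∈ 𝒜, B ∈ ℬ, μ A > 0, μ B > 0 }`,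
interpreted as `1` when no such pair of sets exists. -/
noncomputable def psi' {Ω : Type*} {m0 : MeasurableSpace Ω} (μ : Measure Ω)
    (mA mB : MeasurableSpace Ω) : ℝ :=
  open Classical in
  letI S : Set ℝ := {r | ∃ A B, MeasurableSet[mA] A ∧ MeasurableSet[mB] B ∧
    0 < μ A ∧ 0 < μ B ∧ r = (μ (A ∩ B)).toReal / ((μ A).toReal * (μ B).toReal)}
  if S.Nonempty then sInf S else 1

section Aux

open Set
open scoped symmDiff

variable {Ω : Type*} (mA mB : MeasurableSpace Ω)

/-- `t` is a finite disjoint union of measurable rectangles. -/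
def IsDisjRectUnion (t : Set (Ω × Ω)) : Prop :=
  ∃ (n : ℕ) (A B : Fin n → Set Ω),
    (∀ i, MeasurableSet[mA] (A i)) ∧ (∀ i, MeasurableSet[mB] (B i)) ∧
    (Pairwise fun i j => Disjoint (A i ×ˢ B i) (A j ×ˢ B j)) ∧
    t = ⋃ i, A i ×ˢ B i

variable {mA mB}

lemma isDisjRectUnion_rect {A B : Set Ω} (hA : MeasurableSet[mA] A)
    (hB : MeasurableSet[mB] B) : IsDisjRectUnion mA mB (A ×ˢ B) :=
  ⟨1, fun _ => A, fun _ => B, fun _ => hA, fun _ => hB,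
    Subsingleton.pairwise, (Set.iUnion_const _).symm⟩

lemma isDisjRectUnion_univ : IsDisjRectUnion mA mB univ := by
  simpa using isDisjRectUnion_rect (mA := mA) (mB := mB)
    MeasurableSet.univ MeasurableSet.univ

lemma IsDisjRectUnion.inter {t u : Set (Ω × Ω)} (ht : IsDisjRectUnion mA mB t)
    (hu : IsDisjRectUnion mA mB u) : IsDisjRectUnion mA mB (t ∩ u) := by
  classical
  obtain ⟨n, A, B, hAm, hBm, hd, rfl⟩ := ht
  obtain ⟨m, C, D, hCm, hDm, hd', rfl⟩ := hu
  refine ⟨n * m,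
    fun k => A (finProdFinEquiv.symm k).1 ∩ C (finProdFinEquiv.symm k).2,
    fun k => B (finProdFinEquiv.symm k).1 ∩ D (finProdFinEquiv.symm k).2,
    fun _ => (hAm _).inter (hCm _), fun _ => (hBm _).inter (hDm _), ?_, ?_⟩
  · intro k l hkl
    have hpq : finProdFinEquiv.symm k ≠ finProdFinEquiv.symm l :=
      fun h => hkl (finProdFinEquiv.symm.injective h)
    have hcases : (finProdFinEquiv.symm k).1 ≠ (finProdFinEquiv.symm l).1 ∨
        (finProdFinEquiv.symm k).2 ≠ (finProdFinEquiv.symm l).2 := by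
      by_contra h
      push_neg at h
      exact hpq (Prod.ext h.1 h.2)
    rcases hcases with h1 | h2
    · exact Disjoint.mono (Set.prod_mono inter_subset_left inter_subset_left)
        (Set.prod_mono inter_subset_left inter_subset_left) (hd h1)
    · exact Disjoint.mono (Set.prod_mono inter_subset_right inter_subset_right)
        (Set.prod_mono inter_subset_right inter_subset_right) (hd' h2)
  · ext ⟨x, y⟩
    simp only [mem_inter_iff, mem_iUnion, Set.mem_prod, mem_inter_iff]
    constructor
    · rintro ⟨⟨i, hx, hy⟩, ⟨j, hx', hy'⟩⟩
      refine ⟨finProdFinEquiv (i, j), ?_⟩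
      simp [Equiv.symm_apply_apply, hx, hy, hx', hy']
    · rintro ⟨k, ⟨hx, hx'⟩, hy, hy'⟩
      exact ⟨⟨_, hx, hy⟩, ⟨_, hx', hy'⟩⟩

lemma isDisjRectUnion_rect_compl {A B : Set Ω} (hA : MeasurableSet[mA] A)
    (hB : MeasurableSet[mB] B) : IsDisjRectUnion mA mB ((A ×ˢ B)ᶜ) := by
  classical
  refine ⟨3, ![Aᶜ, A, Aᶜ], ![B, Bᶜ, Bᶜ], ?_, ?_, ?_, ?_⟩
  · intro i; fin_cases i <;> simp [hA, hA.compl]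
  · intro i; fin_cases i <;> simp [hB, hB.compl]
  · intro i j hij
    fin_cases i <;> fin_cases j <;> simp_all <;>
      first
        | exact Or.inl disjoint_compl_left
        | exact Or.inl disjoint_compl_right
        | exact Or.inr disjoint_compl_left
        | exact Or.inr disjoint_compl_right
  · ext ⟨x, y⟩
    by_cases hx : x ∈ A <;> by_cases hy : y ∈ B <;>
      simp [Fin.exists_fin_succ, Set.mem_prod, hx, hy]

lemma isDisjRectUnion_iInter {n : ℕ} (f : Fin n → Set (Ω × Ω))
    (hf : ∀ i, IsDisjRectUnion mA mB (f i)) :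
    IsDisjRectUnion mA mB (⋂ i, f i) := by
  induction n with
  | zero => simpa [Set.iInter_of_empty] using isDisjRectUnion_univ (mA := mA) (mB := mB)
  | succ n ih =>
    have : (⋂ i, f i) = f 0 ∩ ⋂ i : Fin n, f i.succ := by
      ext x
      simp [Fin.forall_fin_succ]
    rw [this]
    exact (hf 0).inter (ih _ fun i => hf i.succ)

lemma IsDisjRectUnion.compl {t : Set (Ω × Ω)} (ht : IsDisjRectUnion mA mB t) :
    IsDisjRectUnion mA mB tᶜ := by
  obtain ⟨n, A, B, hAm, hBm, _, rfl⟩ := ht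
  rw [Set.compl_iUnion]
  exact isDisjRectUnion_iInter _ fun i => isDisjRectUnion_rect_compl (hAm i) (hBm i)

lemma IsDisjRectUnion.union {t u : Set (Ω × Ω)} (ht : IsDisjRectUnion mA mB t)
    (hu : IsDisjRectUnion mA mB u) : IsDisjRectUnion mA mB (t ∪ u) := by
  have : t ∪ u = (tᶜ ∩ uᶜ)ᶜ := by rw [Set.compl_inter, compl_compl, compl_compl]
  rw [this]
  exact (ht.compl.inter hu.compl).compl

lemma isDisjRectUnion_of_mem_generateSetAlgebra {t : Set (Ω × Ω)}
    (ht : t ∈ generateSetAlgebra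
      (Set.image2 (· ×ˢ ·) {A | MeasurableSet[mA] A} {B | MeasurableSet[mB] B})) :
    IsDisjRectUnion mA mB t := by
  induction ht with
  | base s hs =>
    obtain ⟨A, hA, B, hB, rfl⟩ := hs
    exact isDisjRectUnion_rect hA hB
  | empty =>
    exact ⟨0, Fin.elim0, Fin.elim0, fun i => i.elim0, fun i => i.elim0,
      Subsingleton.pairwise, by simp⟩
  | compl s _ ih => exact ih.compl
  | union s u _ _ ihs ihu => exact ihs.union ihu

end Aux

section PsiFacts

variable {Ω : Type*} {m0 : MeasurableSpace Ω}

/-- The defining set of ratios for `psi'`. -/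
def psiSet (μ : Measure Ω) (mA mB : MeasurableSpace Ω) : Set ℝ :=
  {r | ∃ A B, MeasurableSet[mA] A ∧ MeasurableSet[mB] B ∧
    0 < μ A ∧ 0 < μ B ∧ r = (μ (A ∩ B)).toReal / ((μ A).toReal * (μ B).toReal)}

lemma one_mem_psiSet (μ : Measure Ω) [IsProbabilityMeasure μ]
    (mA mB : MeasurableSpace Ω) : (1 : ℝ) ∈ psiSet μ mA mB := by
  refine ⟨Set.univ, Set.univ, MeasurableSet.univ, MeasurableSet.univ, ?_, ?_, ?_⟩ <;>
    simp [measure_univ]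

lemma psiSet_nonempty (μ : Measure Ω) [IsProbabilityMeasure μ]
    (mA mB : MeasurableSpace Ω) : (psiSet μ mA mB).Nonempty :=
  ⟨1, one_mem_psiSet μ mA mB⟩

lemma psiSet_bddBelow (μ : Measure Ω) (mA mB : MeasurableSpace Ω) :
    BddBelow (psiSet μ mA mB) := by
  refine ⟨0, fun r hr => ?_⟩
  obtain ⟨A, B, -, -, -, -, rfl⟩ := hr
  positivity

lemma psi'_eq_sInf (μ : Measure Ω) [IsProbabilityMeasure μ]
    (mA mB : MeasurableSpace Ω) : psi' μ mA mB = sInf (psiSet μ mA mB) := by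
  classical
  rw [show psi' μ mA mB
      = if (psiSet μ mA mB).Nonempty then sInf (psiSet μ mA mB) else 1 from rfl,
    if_pos (psiSet_nonempty μ mA mB)]

lemma psi'_nonneg (μ : Measure Ω) [IsProbabilityMeasure μ]
    (mA mB : MeasurableSpace Ω) : 0 ≤ psi' μ mA mB := by
  rw [psi'_eq_sInf]
  refine le_csInf (psiSet_nonempty μ mA mB) fun r hr => ?_
  obtain ⟨A, B, -, -, -, -, rfl⟩ := hr
  positivity

lemma psi'_le_one (μ : Measure Ω) [IsProbabilityMeasure μ]
    (mA mB : MeasurableSpace Ω) : psi' μ mA mB ≤ 1 := by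
  rw [psi'_eq_sInf]
  exact csInf_le (psiSet_bddBelow μ mA mB) (one_mem_psiSet μ mA mB)

lemma psi'_mul_le (μ : Measure Ω) [IsProbabilityMeasure μ]
    (mA mB : MeasurableSpace Ω) {A B : Set Ω} (hA : MeasurableSet[mA] A)
    (hB : MeasurableSet[mB] B) :
    ENNReal.ofReal (psi' μ mA mB) * (μ A * μ B) ≤ μ (A ∩ B) := by
  rcases eq_or_ne (μ A) 0 with h0 | h0
  · simp [h0]
  rcases eq_or_ne (μ B) 0 with h0' | h0'
  · simp [h0']
  have hposA : 0 < μ A := pos_iff_ne_zero.mpr h0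
  have hposB : 0 < μ B := pos_iff_ne_zero.mpr h0'
  have hfinA : μ A ≠ ⊤ := measure_ne_top μ A
  have hfinB : μ B ≠ ⊤ := measure_ne_top μ B
  have ha : 0 < (μ A).toReal := ENNReal.toReal_pos h0 hfinA
  have hb : 0 < (μ B).toReal := ENNReal.toReal_pos h0' hfinB
  have hcle : psi' μ mA mB ≤ (μ (A ∩ B)).toReal / ((μ A).toReal * (μ B).toReal) := by
    rw [psi'_eq_sInf]
    exact csInf_le (psiSet_bddBelow μ mA mB) ⟨A, B, hA, hB, hposA, hposB, rfl⟩
  have hmul : psi' μ mA mB * ((μ A).toReal * (μ B).toReal) ≤ (μ (A ∩ B)).toReal :=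
    (le_div_iff₀ (by positivity)).mp hcle
  calc ENNReal.ofReal (psi' μ mA mB) * (μ A * μ B)
      = ENNReal.ofReal (psi' μ mA mB * ((μ A).toReal * (μ B).toReal)) := by
        rw [ENNReal.ofReal_mul (psi'_nonneg μ mA mB), ENNReal.ofReal_mul ha.le,
          ENNReal.ofReal_toReal hfinA, ENNReal.ofReal_toReal hfinB]
    _ ≤ ENNReal.ofReal (μ (A ∩ B)).toReal := ENNReal.ofReal_le_ofReal hmul
    _ = μ (A ∩ B) := ENNReal.ofReal_toReal (measure_ne_top μ _)

end PsiFacts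

/-- Let `ν` be the pushforward of `μ` under the diagonal map `ω ↦ (ω, ω)`, viewed as a
measure on the product σ-algebra `𝒜 ⊗ ℬ`, and let `μ₁, μ₂` be the restrictions (trims) of `μ`
to `𝒜` and `ℬ`.  Then `ν ≥ c (μ₁ ⊗ μ₂)` where `c = ψ'(𝒜, ℬ)`, i.e. `ν - c (μ₁ ⊗ μ₂)` is a
nonnegative measure on `𝒜 ⊗ ℬ`. -/
theorem smul_prod_le_map_diagonal {Ω : Type*} {m0 : MeasurableSpace Ω}
    (μ : Measure Ω) [IsProbabilityMeasure μ]
    (mA mB : MeasurableSpace Ω) (hA : mA ≤ m0) (hB : mB ≤ m0) :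
    ∀ s : Set (Ω × Ω), MeasurableSet[MeasurableSpace.prod mA mB] s →
      ENNReal.ofReal (psi' μ mA mB) *
          (@Measure.prod Ω Ω mA mB (μ.trim hA) (μ.trim hB)) s ≤
        (@Measure.map Ω (Ω × Ω) m0 (MeasurableSpace.prod mA mB) (fun ω => (ω, ω)) μ) s := by
  classical
  intro s hs
  set P := MeasurableSpace.prod mA mB with hPdef
  set π : @Measure (Ω × Ω) P := @Measure.prod Ω Ω mA mB (μ.trim hA) (μ.trim hB) with hπdef
  set ν : @Measure (Ω × Ω) P :=
    @Measure.map Ω (Ω × Ω) m0 P (fun ω => (ω, ω)) μ with hνdef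
  set C := ENNReal.ofReal (psi' μ mA mB) with hCdef
  haveI h1 : IsProbabilityMeasure (μ.trim hA) :=
    ⟨by rw [trim_measurableSet_eq hA (@MeasurableSet.univ Ω mA)]; exact measure_univ⟩
  haveI h2 : IsProbabilityMeasure (μ.trim hB) :=
    ⟨by rw [trim_measurableSet_eq hB (@MeasurableSet.univ Ω mB)]; exact measure_univ⟩
  have hT : @Measurable Ω (Ω × Ω) m0 P (fun ω => (ω, ω)) := by
    have hfa : @Measurable Ω Ω m0 mA id := measurable_id'' hA
    have hfb : @Measurable Ω Ω m0 mB id := measurable_id'' hB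
    exact hfa.prodMk hfb
  haveI hν1 : IsProbabilityMeasure ν := by
    rw [hνdef]
    exact Measure.isProbabilityMeasure_map hT.aemeasurable
  haveI hπ1 : IsProbabilityMeasure π := by
    rw [hπdef]
    exact @Measure.prod.instIsProbabilityMeasure Ω Ω mA mB _ _ _ _
  have hC1 : C ≤ 1 := ENNReal.ofReal_le_one.mpr (psi'_le_one μ mA mB)
  -- the inequality on finite disjoint unions of rectangles
  have halg : ∀ t : Set (Ω × Ω), IsDisjRectUnion mA mB t → C * π t ≤ ν t := by
    rintro t ⟨n, A, B, hAm, hBm, hdisj, rfl⟩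
    have hrect : ∀ i, MeasurableSet[P] (A i ×ˢ B i) := fun i =>
      @MeasurableSet.prod Ω Ω mA mB _ _ (hAm i) (hBm i)
    rw [measure_iUnion hdisj hrect, measure_iUnion hdisj hrect, ← ENNReal.tsum_mul_left]
    refine ENNReal.tsum_le_tsum fun i => ?_
    have hπr : π (A i ×ˢ B i) = μ (A i) * μ (B i) := by
      have h := @Measure.prod_prod Ω Ω mA mB (μ.trim hA) (μ.trim hB) inferInstance (A i) (B i)
      rw [trim_measurableSet_eq hA (hAm i), trim_measurableSet_eq hB (hBm i)] at h
      exact h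
    have hνr : ν (A i ×ˢ B i) = μ (A i ∩ B i) := by
      rw [hνdef, Measure.map_apply hT (hrect i)]
      rfl
    rw [hπr, hνr]
    exact psi'_mul_le μ mA mB (hAm i) (hBm i)
  -- approximation by the algebra generated by rectangles
  set 𝒢 : Set (Set (Ω × Ω)) := Set.image2 (· ×ˢ ·)
    {A : Set Ω | MeasurableSet[mA] A} {B : Set Ω | MeasurableSet[mB] B} with h𝒢def
  have hgen : P = MeasurableSpace.generateFrom (generateSetAlgebra 𝒢) := by
    rw [MeasureTheory.generateFrom_generateSetAlgebra_eq, h𝒢def,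
      @generateFrom_prod Ω Ω mA mB]
    rfl
  set ξ : @Measure (Ω × Ω) P := ν + π with hξdef
  haveI hξfin : IsFiniteMeasure ξ := by
    rw [hξdef]
    infer_instance
  have hdense : ξ.MeasureDense (generateSetAlgebra 𝒢) :=
    Measure.MeasureDense.of_generateFrom_isSetAlgebra_finite ξ
      MeasureTheory.isSetAlgebra_generateSetAlgebra hgen
  -- conclude by ε-approximation
  refine ENNReal.le_of_forall_pos_le_add fun ε hε _ => ?_
  obtain ⟨t, htmem, hlt⟩ := hdense.approx s hs (measure_ne_top ξ s) ε
    (by exact_mod_cast hε)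
  have hξst : ξ (s ∆ t) ≤ (ε : ℝ≥0∞) := by
    have := hlt.le
    rwa [ENNReal.ofReal_coe_nnreal] at this
  have hst : s ⊆ t ∪ s ∆ t := by
    intro x hx
    by_cases hxt : x ∈ t
    · exact Or.inl hxt
    · exact Or.inr (Set.mem_symmDiff.mpr (Or.inl ⟨hx, hxt⟩))
  have hts : t ⊆ s ∪ s ∆ t := by
    intro x hx
    by_cases hxs : x ∈ s
    · exact Or.inl hxs
    · exact Or.inr (Set.mem_symmDiff.mpr (Or.inr ⟨hx, hxs⟩))
  have hνξ : ν (s ∆ t) + π (s ∆ t) = ξ (s ∆ t) := by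
    rw [hξdef]; rfl
  calc C * π s ≤ C * (π t + π (s ∆ t)) :=
        mul_le_mul_right ((measure_mono hst).trans (measure_union_le _ _)) C
    _ = C * π t + C * π (s ∆ t) := mul_add _ _ _
    _ ≤ ν t + π (s ∆ t) := by
        refine add_le_add (halg t (isDisjRectUnion_of_mem_generateSetAlgebra htmem)) ?_
        calc C * π (s ∆ t) ≤ 1 * π (s ∆ t) := mul_le_mul_left hC1 _
          _ = π (s ∆ t) := one_mul _
    _ ≤ (ν s + ν (s ∆ t)) + π (s ∆ t) :=
        add_le_add_left ((measure_mono hts).trans (measure_union_le _ _)) _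
    _ = ν s + ξ (s ∆ t) := by rw [add_assoc, hνξ]
    _ ≤ ν s + (ε : ℝ≥0∞) := add_le_add_right hξst _
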